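/- For a nonempty finite directed graph G without self-loops on n ≥ 2 nodes, W_G = 0 if and only if G is the complete graph, i.e., E = {(s,u) : s ≠ u ∈ V} (equivalently m = n(n−1)). -/

import Mathlib

open Finset

noncomputable section

/-- The total mixing gap of a finite directed graph with node set `V` and link set `E`. -/
def mixingGap {V : Type*} [Fintype V] [DecidableEq V] (E : Finset (V × V)) : ℝ :=
  sSup {w : ℝ | ∃ S U : Finset V, Disjoint S U ∧
    w = |((E.filter fun e => e.1 ∈ S ∧ e.2 ∈ U).card : ℝ) / (E.card : ℝ) -
      ((S.card : ℝ) * (U.card : ℝ)) / ((Fintype.card V : ℝ) * ((Fintype.card V : ℝ) - 1))|}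

/-- a nonempty finite directed graph without self-loops on `n ≥ 2` nodes
has zero total mixing gap if and only if it is the complete graph. -/
theorem mixingGap_eq_zero_iff_complete {V : Type*} [Fintype V] [DecidableEq V]
    (E : Finset (V × V)) (hn : 2 ≤ Fintype.card V)
    (hE : E.Nonempty) (hloop : ∀ e ∈ E, e.1 ≠ e.2) :
    mixingGap E = 0 ↔ E = Finset.univ.filter (fun e : V × V => e.1 ≠ e.2) := by
  set n : ℕ := Fintype.card V with hn'
  have hm : (0:ℝ) < E.card := by exact_mod_cast Finset.card_pos.mpr hE
  have hNn : (0:ℝ) < (n:ℝ) * ((n:ℝ) - 1) := by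
    have : (2:ℝ) ≤ (n:ℝ) := by exact_mod_cast hn
    nlinarith
  constructor
  · intro h0
    have hkey : ∀ S U : Finset V, Disjoint S U →
        ((E.filter fun e => e.1 ∈ S ∧ e.2 ∈ U).card : ℝ) / (E.card : ℝ)
          = ((S.card : ℝ) * (U.card : ℝ)) / ((n:ℝ) * ((n:ℝ) - 1)) := by
      intro S U hSU
      set w : ℝ := |((E.filter fun e => e.1 ∈ S ∧ e.2 ∈ U).card : ℝ) / (E.card : ℝ) -
        ((S.card : ℝ) * (U.card : ℝ)) / ((n:ℝ) * ((n:ℝ) - 1))| with hw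
      have hmem : w ∈ {w : ℝ | ∃ S U : Finset V, Disjoint S U ∧
          w = |((E.filter fun e => e.1 ∈ S ∧ e.2 ∈ U).card : ℝ) / (E.card : ℝ) -
            ((S.card : ℝ) * (U.card : ℝ)) / ((n:ℝ) * ((n:ℝ) - 1))|} :=
        ⟨S, U, hSU, rfl⟩
      have hbdd : BddAbove {w : ℝ | ∃ S U : Finset V, Disjoint S U ∧
          w = |((E.filter fun e => e.1 ∈ S ∧ e.2 ∈ U).card : ℝ) / (E.card : ℝ) -
            ((S.card : ℝ) * (U.card : ℝ)) / ((n:ℝ) * ((n:ℝ) - 1))|} := by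
        refine ⟨1 + (n:ℝ) * n, ?_⟩
        rintro x ⟨S, U, hd, rfl⟩
        have h1 : ((E.filter fun e => e.1 ∈ S ∧ e.2 ∈ U).card : ℝ) / (E.card : ℝ) ≤ 1 := by
          rw [div_le_one hm]
          exact_mod_cast Finset.card_filter_le _ _
        have h1' : (0:ℝ) ≤ ((E.filter fun e => e.1 ∈ S ∧ e.2 ∈ U).card : ℝ) / (E.card : ℝ) :=
          div_nonneg (by positivity) hm.le
        have h2 : (0:ℝ) ≤ ((S.card : ℝ) * (U.card : ℝ)) / ((n:ℝ) * ((n:ℝ) - 1)) :=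
          div_nonneg (by positivity) hNn.le
        have hS : (S.card : ℝ) ≤ n := by exact_mod_cast Finset.card_le_card (Finset.subset_univ S)
        have hU : (U.card : ℝ) ≤ n := by exact_mod_cast Finset.card_le_card (Finset.subset_univ U)
        have hden : (1:ℝ) ≤ (n:ℝ) * ((n:ℝ) - 1) := by
          have : (2:ℝ) ≤ (n:ℝ) := by exact_mod_cast hn
          nlinarith
        have h3 : ((S.card : ℝ) * (U.card : ℝ)) / ((n:ℝ) * ((n:ℝ) - 1)) ≤ (n:ℝ) * n := by
          rw [div_le_iff₀ hNn]
          have hSc : (0:ℝ) ≤ (S.card : ℝ) := by positivity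
          have hUc : (0:ℝ) ≤ (U.card : ℝ) := by positivity
          nlinarith
        rw [abs_sub_le_iff]
        constructor <;> nlinarith
      have hle := le_csSup hbdd hmem
      rw [mixingGap] at h0
      rw [h0] at hle
      have := abs_nonneg (((E.filter fun e => e.1 ∈ S ∧ e.2 ∈ U).card : ℝ) / (E.card : ℝ) -
        ((S.card : ℝ) * (U.card : ℝ)) / ((n:ℝ) * ((n:ℝ) - 1)))
      have h0' : w = 0 := le_antisymm hle this
      rw [hw, abs_eq_zero, sub_eq_zero] at h0'
      exact h0'
    ext e
    obtain ⟨s, u⟩ := e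
    simp only [Finset.mem_filter, Finset.mem_univ, true_and]
    constructor
    · intro h; exact hloop _ h
    · intro hsu
      have hd : Disjoint ({s} : Finset V) {u} := Finset.disjoint_singleton.mpr hsu
      have hk := hkey {s} {u} hd
      simp only [Finset.card_singleton, Nat.cast_one, one_mul] at hk
      by_contra hne
      have hc0 : (E.filter fun e => e.1 ∈ ({s} : Finset V) ∧ e.2 ∈ ({u} : Finset V)) = ∅ := by
        apply Finset.filter_eq_empty_iff.mpr
        rintro ⟨a, b⟩ hab hp
        simp only [Finset.mem_singleton] at hp
        obtain ⟨rfl, rfl⟩ := hp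
        exact hne hab
      rw [hc0] at hk
      simp only [Finset.card_empty, Nat.cast_zero, zero_div] at hk
      have : (0:ℝ) < 1 / ((n:ℝ) * ((n:ℝ) - 1)) := by positivity
      linarith [hk ▸ this]
  · intro hEc
    have hfilter : ∀ S U : Finset V, Disjoint S U →
        (E.filter fun e => e.1 ∈ S ∧ e.2 ∈ U) = S ×ˢ U := by
      intro S U hd
      ext ⟨a, b⟩
      simp only [hEc, Finset.mem_filter, Finset.mem_univ, true_and, Finset.mem_product]
      have hne : a ∈ S → b ∈ U → a ≠ b := fun ha hb h =>
        Finset.disjoint_left.mp hd ha (h ▸ hb)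
      tauto
    have hcard : (E.card : ℝ) = (n:ℝ) * ((n:ℝ) - 1) := by
      have h1 : E = (Finset.univ : Finset V).offDiag := by
        rw [hEc]; ext ⟨a, b⟩; simp [Finset.mem_offDiag]
      have h2 : E.card = n * n - n := by
        rw [h1, Finset.offDiag_card, Finset.card_univ]
      rw [h2]
      have hle : n ≤ n * n := Nat.le_mul_of_pos_left n (by omega)
      rw [Nat.cast_sub hle]
      push_cast
      ring
    have hset : {w : ℝ | ∃ S U : Finset V, Disjoint S U ∧
        w = |((E.filter fun e => e.1 ∈ S ∧ e.2 ∈ U).card : ℝ) / (E.card : ℝ) -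
          ((S.card : ℝ) * (U.card : ℝ)) / ((n:ℝ) * ((n:ℝ) - 1))|} = {0} := by
      ext w
      simp only [Set.mem_setOf_eq, Set.mem_singleton_iff]
      constructor
      · rintro ⟨S, U, hd, rfl⟩
        rw [hfilter S U hd, Finset.card_product, hcard]
        push_cast
        simp [sub_self]
      · rintro rfl
        exact ⟨∅, ∅, Finset.disjoint_empty_left _, by simp⟩
    rw [mixingGap, hset, csSup_singleton]

end
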